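/- Let F_q be a finite field of odd characteristic and let α ∈ F_q with α ≠ 0 and α² ≠ 1. Define polynomials a(x) = 2αx − α² − 1, b(x) = 2αx² + (−3α² − 1)x + α³ + α, c(x) = (−α² − 1)x² + (α³ + α)x − α⁴/4 − α²/2 + 3/4, and Δ(x) = b(x)² − 4a(x)c(x) in F_q[x]. Then there is no polynomial f(x) with coefficients in the algebraic closure of F_q such that Δ(x) = f(x)² (i.e., the image of Δ in (algebraic closure of F_q)[x] is not the square of a polynomial). -/

import Mathlib

open Polynomial

theorem discriminant_even_not_square_aux (K : Type*) [Field K] (β x : K) (hβ : β ≠ 0)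
    (h2 : (2:K) ≠ 0) (h4 : (4:K) ≠ 0) :
    (2 * β * x ^ 2 + (-3 * β ^ 2 - 1) * x + (β ^ 3 + β)) ^ 2 -
      4 * (2 * β * x + (-β ^ 2 - 1)) * ((-β ^ 2 - 1) * x ^ 2 + (β ^ 3 + β) * x +
        (-β ^ 4 / 4 - β ^ 2 / 2 + 3 / 4)) =
    4 * β ^ 2 * ((x - 1) * ((x + 1) * ((x - (β ^ 2 - 3) / (2 * β)) *
      (x - (β ^ 2 + 1) / (2 * β))))) := by
  field_simp
  ring

/-- Finite field of odd characteristic, `α ≠ 0`, `α² ≠ 1`. The discriminant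
polynomial `Δ(x) = b(x)² − 4a(x)c(x)`, with
`a(x) = 2αx − α² − 1`, `b(x) = 2αx² + (−3α² − 1)x + α³ + α`,
`c(x) = (−α² − 1)x² + (α³ + α)x − α⁴/4 − α²/2 + 3/4`,
is not the square of any polynomial over the algebraic closure of `F`. -/
theorem discriminant_even_not_square (F : Type*) [Field F] [Fintype F]
    (hchar : ringChar F ≠ 2) (α : F) (hα : α ≠ 0) (hα1 : α ^ 2 ≠ 1) :
    ¬ ∃ f : Polynomial (AlgebraicClosure F),
      Polynomial.map (algebraMap F (AlgebraicClosure F))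
        ((C (2 * α) * X ^ 2 + C (-3 * α ^ 2 - 1) * X + C (α ^ 3 + α)) ^ 2 -
          C 4 * (C (2 * α) * X + C (-α ^ 2 - 1)) *
            (C (-α ^ 2 - 1) * X ^ 2 + C (α ^ 3 + α) * X +
              C (-(α ^ 4) / 4 - α ^ 2 / 2 + 3 / 4))) = f ^ 2 := by
  rintro ⟨f, hf⟩
  set K := AlgebraicClosure F
  set φ := algebraMap F K with hφ
  set β : K := φ α with hβdef
  have hinj : Function.Injective φ := (algebraMap F K).injective
  have hβ : β ≠ 0 := fun h => hα ((_root_.map_eq_zero φ).mp (hβdef ▸ h))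
  have h2F : (2 : F) ≠ 0 := Ring.two_ne_zero hchar
  have h2 : (2 : K) ≠ 0 := by
    rw [show (2 : K) = φ 2 from (map_ofNat φ 2).symm]
    exact fun h => h2F ((_root_.map_eq_zero φ).mp h)
  have h4 : (4 : K) ≠ 0 := by
    intro h
    apply h2
    have : (2 : K) * 2 = 0 := by rw [← h]; norm_num
    rcases mul_eq_zero.mp this with h' | h' <;> exact h'
  set r : K := (β ^ 2 + 1) / (2 * β) with hr
  set s : K := (β ^ 2 - 3) / (2 * β) with hs
  have h2β : (2 : K) * β ≠ 0 := mul_ne_zero h2 hβ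
  have hβ1 : β ^ 2 ≠ 1 := fun h => hα1 (hinj (by simpa using h))
  -- the factorization of the discriminant
  have hΔ : Polynomial.map φ
        ((C (2 * α) * X ^ 2 + C (-3 * α ^ 2 - 1) * X + C (α ^ 3 + α)) ^ 2 -
          C 4 * (C (2 * α) * X + C (-α ^ 2 - 1)) *
            (C (-α ^ 2 - 1) * X ^ 2 + C (α ^ 3 + α) * X +
              C (-(α ^ 4) / 4 - α ^ 2 / 2 + 3 / 4)))
      = C (4 * β ^ 2) * ((X - C 1) * ((X + C 1) * ((X - C s) * (X - C r)))) := by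
    apply Polynomial.funext
    intro x
    simp only [Polynomial.map_sub, Polynomial.map_add, Polynomial.map_mul, Polynomial.map_pow,
      Polynomial.map_C, Polynomial.map_X, eval_sub, eval_add, eval_mul, eval_pow, eval_C, eval_X]
    simp only [map_mul, map_add, map_sub, map_neg, map_pow, map_div₀, map_ofNat, map_one, ← hβdef]
    rw [hr, hs]
    exact discriminant_even_not_square_aux K β x hβ h2 h4
  rw [hΔ] at hf
  -- nonvanishing facts
  have hC : (C (4 * β ^ 2) : K[X]) ≠ 0 := by
    simpa using mul_ne_zero h4 (pow_ne_zero 2 hβ)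
  have hne0 : C (4 * β ^ 2) * ((X - C 1) * ((X + C 1) * ((X - C s) * (X - C r)))) ≠ 0 := by
    apply mul_ne_zero hC
    apply mul_ne_zero (X_sub_C_ne_zero 1)
    apply mul_ne_zero
    · have := X_sub_C_ne_zero (-1 : K)
      simpa [sub_neg_eq_add] using this
    · exact mul_ne_zero (X_sub_C_ne_zero s) (X_sub_C_ne_zero r)
  have hf0 : f ≠ 0 := by
    intro h
    rw [h] at hf
    simp only [zero_pow, ne_eq, OfNat.ofNat_ne_zero, not_false_eq_true] at hf
    exact hne0 hf
  classical
  -- root multiplicity at r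
  have hr1 : r ≠ 1 := by
    intro h
    rw [hr, div_eq_one_iff_eq h2β] at h
    have h0 : (β - 1) ^ 2 = 0 := by linear_combination h
    have hb1 : β = 1 := sub_eq_zero.mp (pow_eq_zero_iff (n := 2) (by norm_num) |>.mp h0)
    exact hβ1 (by rw [hb1]; ring)
  have hrm1 : r ≠ -1 := by
    intro h
    rw [hr, div_eq_iff h2β] at h
    have h0 : (β + 1) ^ 2 = 0 := by linear_combination h
    have hb1 : β = -1 :=
      eq_neg_of_add_eq_zero_left (pow_eq_zero_iff (n := 2) (by norm_num) |>.mp h0)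
    exact hβ1 (by rw [hb1]; ring)
  have hrs : r ≠ s := by
    intro h
    rw [hr, hs, div_eq_div_iff h2β h2β] at h
    have h' := mul_right_cancel₀ h2β h
    exact h4 (by linear_combination h')
  have hmul : rootMultiplicity r
      (C (4 * β ^ 2) * ((X - C 1) * ((X + C 1) * ((X - C s) * (X - C r))))) = 1 := by
    rw [rootMultiplicity_mul hne0,
      rootMultiplicity_mul (by
        exact mul_ne_zero (X_sub_C_ne_zero 1)
          (mul_ne_zero (by simpa [sub_neg_eq_add] using X_sub_C_ne_zero (-1 : K))
            (mul_ne_zero (X_sub_C_ne_zero s) (X_sub_C_ne_zero r)))),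
      rootMultiplicity_mul (by
        exact mul_ne_zero (by simpa [sub_neg_eq_add] using X_sub_C_ne_zero (-1 : K))
          (mul_ne_zero (X_sub_C_ne_zero s) (X_sub_C_ne_zero r))),
      rootMultiplicity_mul (mul_ne_zero (X_sub_C_ne_zero s) (X_sub_C_ne_zero r))]
    have e0 : rootMultiplicity r (C (4 * β ^ 2) : K[X]) = 0 :=
      rootMultiplicity_eq_zero (by simp [IsRoot, mul_ne_zero h4 (pow_ne_zero 2 hβ)])
    have e1 : rootMultiplicity r (X - C (1 : K)) = 0 := by
      rw [rootMultiplicity_X_sub_C]; simp [hr1]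
    have e2 : rootMultiplicity r (X + C (1 : K)) = 0 := by
      have : (X + C (1:K)) = X - C (-1 : K) := by simp [sub_neg_eq_add]
      rw [this, rootMultiplicity_X_sub_C]; simp [hrm1]
    have e3 : rootMultiplicity r (X - C s) = 0 := by
      rw [rootMultiplicity_X_sub_C]; simp [hrs]
    have e4 : rootMultiplicity r (X - C r) = 1 := by
      rw [rootMultiplicity_X_sub_C]; simp
    omega
  rw [hf] at hmul
  rw [pow_two, rootMultiplicity_mul (by exact mul_ne_zero hf0 hf0)] at hmul
  omega
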